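/- Time-axis transformation of the scaled error dynamics (proof of Proposition 1): Let u : [0,T) → ℝ be continuous, let f, f_0 : [0,T)×ℝⁿ → ℝⁿ, and let x, x_0 : [0,T) → ℝⁿ be differentiable with ẋ(t) = A x(t) + B u(t) + f(t, x(t)) and ẋ_0(t) = A x_0(t) + f_0(t, x_0(t)). Define η(t) ∈ ℝⁿ by η_i(t) = r(t)^{n−i+1}(x_i(t) − x_{0,i}(t)) for i = 1,…,n, and Φ(t) ∈ ℝⁿ by Φ_i(t) = r(t)^{n−i}( f_i(t,x(t)) − f_{0,i}(t,x_0(t)) ). Then the reparametrized function η̃(τ) := η(t(τ)) with t(τ) = T(1−e^{−τ}) is differentiable on [0,∞) and satisfies, for all τ ≥ 0, dη̃/dτ (τ) = b ( A η̃(τ) + B u(t(τ)) + Φ(t(τ)) ) + D_c η̃(τ). -/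

import Mathlib

open Matrix Set

/-- Time-axis transformation of the scaled error dynamics (proof of Proposition 1):
with `r(t) = b/(T-t)`, the scaled error `η_i(t) = r(t)^{n-i+1}(x_i(t) - x_{0,i}(t))`
(0-based exponent `n - i`) and scaled uncertainty
`Φ_i(t) = r(t)^{n-i}(f_i(t,x(t)) - f_{0,i}(t,x_0(t)))` (0-based exponent `n-1-i`),
the reparametrization `η̃(τ) = η(t(τ))` with `t(τ) = T(1-e^{-τ})` satisfies
`dη̃/dτ = b (A η̃ + B u + Φ) + D_c η̃` on `[0,∞)`, with `D_c = diag(n,…,1)`. -/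
theorem time_axis_transformation (n : ℕ) (hn : 0 < n)
    (T b : ℝ) (hT : 0 < T) (hb : T ≤ b)
    (A : Matrix (Fin n) (Fin n) ℝ)
    (hA : ∀ i j : Fin n, A i j = if (i : ℕ) + 1 = (j : ℕ) then 1 else 0)
    (B : Fin n → ℝ) (hB : ∀ i : Fin n, B i = if (i : ℕ) = n - 1 then 1 else 0)
    (u : ℝ → ℝ) (hu : ContinuousOn u (Set.Ico 0 T))
    (f f0 : ℝ → (Fin n → ℝ) → (Fin n → ℝ))
    (x x0 : ℝ → (Fin n → ℝ))
    (hx : ∀ t ∈ Set.Ico (0 : ℝ) T,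
      HasDerivWithinAt x (A *ᵥ x t + u t • B + f t (x t)) (Set.Ico 0 T) t)
    (hx0 : ∀ t ∈ Set.Ico (0 : ℝ) T,
      HasDerivWithinAt x0 (A *ᵥ x0 t + f0 t (x0 t)) (Set.Ico 0 T) t)
    (η Φ : ℝ → (Fin n → ℝ))
    (hη : ∀ t (i : Fin n),
      η t i = (b / (T - t)) ^ (n - (i : ℕ)) * (x t i - x0 t i))
    (hΦ : ∀ t (i : Fin n),
      Φ t i = (b / (T - t)) ^ (n - 1 - (i : ℕ)) * (f t (x t) i - f0 t (x0 t) i))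
    (Dc : Matrix (Fin n) (Fin n) ℝ)
    (hDc : Dc = Matrix.diagonal fun i : Fin n => ((n - (i : ℕ) : ℕ) : ℝ)) :
    ∀ τ ∈ Set.Ici (0 : ℝ),
      HasDerivWithinAt (fun σ => η (T * (1 - Real.exp (-σ))))
        (b • (A *ᵥ η (T * (1 - Real.exp (-τ))) +
              u (T * (1 - Real.exp (-τ))) • B +
              Φ (T * (1 - Real.exp (-τ)))) +
          Dc *ᵥ η (T * (1 - Real.exp (-τ))))
        (Set.Ici 0) τ := by
  intro τ hτ
  have hb0 : (0:ℝ) < b := lt_of_lt_of_le hT hb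
  set t := T * (1 - Real.exp (-τ)) with htdef
  have hexp_pos : 0 < Real.exp (-τ) := Real.exp_pos _
  have hexp_le : Real.exp (-τ) ≤ 1 := Real.exp_le_one_iff.mpr (by simpa using hτ)
  have hTt : T - t = T * Real.exp (-τ) := by rw [htdef]; ring
  have hTt0 : 0 < T - t := by rw [hTt]; positivity
  have ht_mem : t ∈ Set.Ico (0:ℝ) T := by
    constructor
    · rw [htdef]; nlinarith
    · nlinarith
  -- the time map and its derivative
  have hmaps : MapsTo (fun σ : ℝ => T * (1 - Real.exp (-σ))) (Ici (0:ℝ)) (Ico 0 T) := by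
    intro σ hσ
    have h1 : 0 < Real.exp (-σ) := Real.exp_pos _
    have h2 : Real.exp (-σ) ≤ 1 := Real.exp_le_one_iff.mpr (by simpa using hσ)
    show T * (1 - Real.exp (-σ)) ∈ Set.Ico 0 T
    constructor
    · nlinarith
    · nlinarith
  have h1 : HasDerivAt (fun σ : ℝ => Real.exp (-σ)) (-Real.exp (-τ)) τ := by
    have h := (Real.hasDerivAt_exp (-τ)).comp τ ((hasDerivAt_id τ).neg)
    simp at h
    exact h
  have htd : HasDerivWithinAt (fun σ : ℝ => T * (1 - Real.exp (-σ)))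
      (T * Real.exp (-τ)) (Ici 0) τ := by
    have := ((hasDerivAt_const τ (1:ℝ)).sub h1).const_mul T
    simpa using this.hasDerivWithinAt
  -- mulVec entry lemmas
  have hAv : ∀ v : Fin n → ℝ, ∀ i : Fin n,
      (A *ᵥ v) i = if h : (i:ℕ)+1 < n then v ⟨(i:ℕ)+1, h⟩ else 0 := by
    intro v i
    by_cases h : (i:ℕ)+1 < n
    · have key : ∀ j : Fin n, ((i:ℕ)+1 = (j:ℕ)) ↔ j = ⟨(i:ℕ)+1, h⟩ := by
        intro j
        constructor
        · intro hj; exact Fin.ext hj.symm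
        · intro hj; rw [hj]
      rw [dif_pos h]
      simp only [Matrix.mulVec, dotProduct, hA]
      rw [Finset.sum_congr rfl (fun j _ => by rw [if_congr (key j) rfl rfl])]
      simp
    · rw [dif_neg h]
      simp only [Matrix.mulVec, dotProduct, hA]
      apply Finset.sum_eq_zero
      intro j _
      rw [if_neg, zero_mul]
      intro hj
      exact h (hj ▸ j.isLt)
  have hDv : ∀ v : Fin n → ℝ, ∀ i : Fin n,
      (Dc *ᵥ v) i = ((n - (i:ℕ) : ℕ) : ℝ) * v i := by
    intro v i
    rw [hDc]
    simp [Matrix.mulVec_diagonal]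
  -- componentwise
  rw [hasDerivWithinAt_pi]
  intro i
  set k : ℕ := n - (i:ℕ) with hkdef
  have hik : (i:ℕ) < n := i.isLt
  have hk1 : 1 ≤ k := by omega
  set r : ℝ := b / (T - t) with hrdef
  -- derivative of r^k at t within Ico 0 T
  have hden : HasDerivAt (fun s : ℝ => T - s) (-1) t := by
    simpa using (hasDerivAt_id t).const_sub T
  have hr : HasDerivAt (fun s : ℝ => b / (T - s)) (b / (T - t)^2) t := by
    have h2 := (hasDerivAt_const t b).div hden (ne_of_gt hTt0)
    refine h2.congr_deriv ?_
    ring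
  have hrk : HasDerivAt (fun s : ℝ => (b / (T - s))^k)
      ((k : ℝ) * (b / (T - t))^(k-1) * (b / (T - t)^2)) t := by
    exact hr.pow k
  -- derivative of components of x, x0
  have hxi := hasDerivWithinAt_pi.mp (hx t ht_mem) i
  have hx0i := hasDerivWithinAt_pi.mp (hx0 t ht_mem) i
  have hei : HasDerivWithinAt (fun s => x s i - x0 s i)
      ((A *ᵥ x t + u t • B + f t (x t)) i - (A *ᵥ x0 t + f0 t (x0 t)) i)
      (Ico 0 T) t := hxi.sub hx0i
  have hprod : HasDerivWithinAt (fun s => (b / (T - s))^k * (x s i - x0 s i))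
      (((k : ℝ) * (b / (T - t))^(k-1) * (b / (T - t)^2)) * (x t i - x0 t i)
        + (b / (T - t))^k *
          ((A *ᵥ x t + u t • B + f t (x t)) i - (A *ᵥ x0 t + f0 t (x0 t)) i))
      (Ico 0 T) t := hrk.hasDerivWithinAt.mul hei
  have hcomp := hprod.comp τ htd hmaps
  have hfun : (fun σ : ℝ => η (T * (1 - Real.exp (-σ))) i)
      = (fun s => (b / (T - s))^k * (x s i - x0 s i)) ∘ (fun σ : ℝ => T * (1 - Real.exp (-σ))) := by
    funext σ
    simp [Function.comp, hη, hkdef]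
  rw [hfun]
  refine hcomp.congr_deriv ?_
  symm
  -- now the value identity
  have hPi : (b • (A *ᵥ η t + u t • B + Φ t) + Dc *ᵥ η t) i
      = b * ((A *ᵥ η t) i + u t * B i + Φ t i) + (Dc *ᵥ η t) i := by
    simp [mul_add]
  rw [hPi]
  simp only [Pi.add_apply, Pi.smul_apply, smul_eq_mul]
  rw [hAv, hAv, hAv, hDv]
  rw [hTt.symm] at *
  obtain ⟨m, hm⟩ : ∃ m, k = m + 1 := ⟨k - 1, by omega⟩
  have hcast : ((n - (i:ℕ) : ℕ) : ℝ) = ((m:ℝ) + 1) := by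
    rw [← hkdef, hm]; push_cast; ring
  have hηi : η t i = (b / (T - t)) ^ (m + 1) * (x t i - x0 t i) := by
    rw [hη t i, ← hkdef, hm]
  have hΦi : Φ t i = (b / (T - t)) ^ m * (f t (x t) i - f0 t (x0 t) i) := by
    rw [hΦ t i, show n - 1 - (i:ℕ) = m from by omega]
  rw [hm]
  simp only [Nat.add_sub_cancel]
  by_cases h : (i:ℕ)+1 < n
  · simp only [dif_pos h]
    have hBi : B i = 0 := by rw [hB, if_neg]; omega
    have hη1 : η t ⟨(i:ℕ)+1, h⟩ =
        (b / (T - t)) ^ m * (x t ⟨(i:ℕ)+1, h⟩ - x0 t ⟨(i:ℕ)+1, h⟩) := by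
      have := hη t ⟨(i:ℕ)+1, h⟩
      simpa [show n - ((i:ℕ)+1) = m from by omega] using this
    rw [hBi, hη1, hΦi, hcast, hηi]
    have hTt0' : T - t ≠ 0 := ne_of_gt hTt0
    generalize T - t = s at hTt0' ⊢
    simp only [div_pow]
    field_simp
    push_cast
    ring
  · simp only [dif_neg h]
    have hin : (i:ℕ) = n - 1 := by omega
    have hm0 : m = 0 := by omega
    have hBi : B i = 1 := by rw [hB, if_pos hin]
    rw [hBi, hΦi, hcast, hηi, hm0]
    have hTt0' : T - t ≠ 0 := ne_of_gt hTt0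
    generalize T - t = s at hTt0' ⊢
    simp only [div_pow]
    field_simp
    ring
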